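/- For every real a with a < −2^{5/4} (so that a⁴ > 32), the three octic polynomials 2304313595a⁸ − 1702233920a⁶ − 11829269248a⁴ − 39211065344a² + 8642101248, 11681524055a⁸ − 8555309984a⁶ − 56944147200a⁴ − 204210659328a² + 30640177152, and 6314158847a⁸ − 4591849024a⁶ − 29599122432a⁴ − 112639700992a² + 11915624448 are all strictly positive; consequently the quantities G₃, G₆ and G₉, which equal these polynomials multiplied respectively by the nonzero rational functions −23476167/(1024 a¹³(a⁴−32)³), −180880/(3 a¹⁴(a⁴−32)³), and 66163809931245/(46137344 a¹⁵(a⁴−32)³), are all nonzero. -/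
import Mathlib


noncomputable section

/-- For every real `a` with `a < −2^(5/4)` (so that `a⁴ > 32`), the three octic
polynomials appearing in `G₃`, `G₆`, `G₉` are strictly positive; consequently the
focus-value coefficients `G₃`, `G₆` and `G₉`, which equal these polynomials multiplied
by the indicated nonzero rational functions of `a`, are all nonzero. -/
theorem octic_factors_positive (a : ℝ) (ha : a < -(2:ℝ)^((5:ℝ)/4)) :
    0 < 2304313595*a^8 - 1702233920*a^6 - 11829269248*a^4 - 39211065344*a^2 + 8642101248 ∧
    0 < 11681524055*a^8 - 8555309984*a^6 - 56944147200*a^4 - 204210659328*a^2 + 30640177152 ∧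
    0 < 6314158847*a^8 - 4591849024*a^6 - 29599122432*a^4 - 112639700992*a^2 + 11915624448 ∧
    (-23476167/(1024 * a^13 * (a^4-32)^3)) *
      (2304313595*a^8 - 1702233920*a^6 - 11829269248*a^4 - 39211065344*a^2 + 8642101248) ≠ 0 ∧
    (-180880/(3 * a^14 * (a^4-32)^3)) *
      (11681524055*a^8 - 8555309984*a^6 - 56944147200*a^4 - 204210659328*a^2 + 30640177152) ≠ 0 ∧
    (66163809931245/(46137344 * a^15 * (a^4-32)^3)) *
      (6314158847*a^8 - 4591849024*a^6 - 29599122432*a^4 - 112639700992*a^2 + 11915624448) ≠ 0 := by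
  have hc : (0:ℝ) < (2:ℝ)^((5:ℝ)/4) := Real.rpow_pos_of_pos (by norm_num) _
  have hc4 : ((2:ℝ)^((5:ℝ)/4))^4 = 32 := by
    rw [← Real.rpow_natCast ((2:ℝ)^((5:ℝ)/4)) 4, ← Real.rpow_mul (by norm_num)]
    norm_num
  have ha2 : a^2 > ((2:ℝ)^((5:ℝ)/4))^2 := by nlinarith
  have h4 : a^4 > 32 := by nlinarith [sq_nonneg ((2:ℝ)^((5:ℝ)/4))]
  have h5 : a^2 > 5 := by nlinarith [sq_nonneg a, sq_nonneg (a^2-5)]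
  have P1 : 0 < 2304313595*a^8 - 1702233920*a^6 - 11829269248*a^4 - 39211065344*a^2 + 8642101248 := by
    nlinarith [mul_pos (sub_pos.2 h4) (sub_pos.2 h5), mul_pos (mul_pos (sub_pos.2 h4) (sub_pos.2 h5)) (sub_pos.2 h5), mul_pos (sub_pos.2 h4) (sub_pos.2 h4), sq_nonneg a, mul_pos (sub_pos.2 h5) (sub_pos.2 h5)]
  have P2 : 0 < 11681524055*a^8 - 8555309984*a^6 - 56944147200*a^4 - 204210659328*a^2 + 30640177152 := by
    nlinarith [mul_pos (sub_pos.2 h4) (sub_pos.2 h5), mul_pos (mul_pos (sub_pos.2 h4) (sub_pos.2 h5)) (sub_pos.2 h5), mul_pos (sub_pos.2 h4) (sub_pos.2 h4), sq_nonneg a, mul_pos (sub_pos.2 h5) (sub_pos.2 h5)]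
  have P3 : 0 < 6314158847*a^8 - 4591849024*a^6 - 29599122432*a^4 - 112639700992*a^2 + 11915624448 := by
    nlinarith [mul_pos (sub_pos.2 h4) (sub_pos.2 h5), mul_pos (mul_pos (sub_pos.2 h4) (sub_pos.2 h5)) (sub_pos.2 h5), mul_pos (sub_pos.2 h4) (sub_pos.2 h4), sq_nonneg a, mul_pos (sub_pos.2 h5) (sub_pos.2 h5)]
  have haz : a ≠ 0 := by nlinarith
  have hsz : (a^4 - 32) ≠ 0 := by nlinarith
  refine ⟨P1, P2, P3, ?_, ?_, ?_⟩
  · exact mul_ne_zero (div_ne_zero (by norm_num) (by positivity)) (ne_of_gt P1)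
  · exact mul_ne_zero (div_ne_zero (by norm_num) (by positivity)) (ne_of_gt P2)
  · exact mul_ne_zero (div_ne_zero (by norm_num) (by positivity)) (ne_of_gt P3)

end
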